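/- The centralizer of the matrix e_1 = diag(1, 2, …, k) in the group G_k is exactly the torus T: for A ∈ G_k, one has A·e_1 = e_1·A if and only if A = diag(λ, λ², …, λ^k) for some λ ∈ ℂ*. -/

import Mathlib

/-- The matrix `M(a)` with `M(a)_{ij} = Σ_{s_1+⋯+s_i = j, s_l ≥ 1} a_{s_1} ⋯ a_{s_i}`. -/
noncomputable def Mmat (k : ℕ) (a : Fin k → ℂ) : Matrix (Fin k) (Fin k) ℂ :=
  fun i j =>
    ∑ s ∈ (Finset.Nat.antidiagonalTuple (i.val + 1) (j.val + 1)).filter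
        (fun s => ∀ l, 0 < s l),
      ∏ l, (if h : 1 ≤ s l ∧ s l ≤ k then a ⟨s l - 1, by omega⟩ else 0)

/-- `G_k = { M(a) : a_1 ≠ 0 }`. -/
noncomputable def Gset (k : ℕ) [NeZero k] : Set (Matrix (Fin k) (Fin k) ℂ) :=
  {A | ∃ a : Fin k → ℂ, a 0 ≠ 0 ∧ A = Mmat k a}

/-- `e_1 = diag(1, 2, …, k)`. -/
def Eone (k : ℕ) : Matrix (Fin k) (Fin k) ℂ :=
  Matrix.diagonal (fun i : Fin k => ((i : ℕ) + 1 : ℂ))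

/-- The centralizer of `e_1 = diag(1, …, k)` in `G_k` is exactly the torus `T`:
for `A ∈ G_k`, `A·e_1 = e_1·A` iff `A = diag(λ, λ², …, λ^k)` for some `λ ∈ ℂ*`. -/
lemma all_one {n : ℕ} (f : Fin n → ℕ) (hpos : ∀ l, 0 < f l)
    (hsum : ∑ l, f l = n) : f = fun _ => 1 := by
  funext l
  by_contra h
  have h2 : 2 ≤ f l := by have := hpos l; omega
  have := Finset.sum_lt_sum (f := fun _ : Fin n => 1) (g := f)
    (fun x _ => hpos x) ⟨l, Finset.mem_univ l, by show 1 < f l; omega⟩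
  simp at this
  omega

lemma Mmat_diag (k : ℕ) [NeZero k] (a : Fin k → ℂ) (i : Fin k) :
    Mmat k a i i = a 0 ^ (i.val + 1) := by
  have hset : (Finset.Nat.antidiagonalTuple (i.val + 1) (i.val + 1)).filter
      (fun s => ∀ l, 0 < s l) = {fun _ => 1} := by
    ext s
    simp only [Finset.mem_filter, Finset.Nat.mem_antidiagonalTuple, Finset.mem_singleton]
    constructor
    · rintro ⟨hs, hpos⟩
      exact all_one s hpos hs
    · rintro rfl
      simp
  rw [Mmat, hset, Finset.sum_singleton]
  have hk : 1 ≤ k := NeZero.one_le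
  have hterm : ∀ l : Fin (i.val + 1),
      (if h : 1 ≤ (fun _ : Fin (i.val + 1) => 1) l ∧ (fun _ : Fin (i.val + 1) => 1) l ≤ k
        then a ⟨(fun _ : Fin (i.val + 1) => 1) l - 1, by omega⟩ else 0) = a 0 := by
    intro l
    rw [dif_pos ⟨le_refl 1, hk⟩]
    congr 1
  rw [Finset.prod_congr rfl (fun l _ => hterm l), Finset.prod_const]
  simp

theorem centralizer_Eone_eq_torus (k : ℕ) [NeZero k]
    (A : Matrix (Fin k) (Fin k) ℂ) (hA : A ∈ Gset k) :
    A * Eone k = Eone k * A ↔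
      ∃ lam : ℂ, lam ≠ 0 ∧ A = Matrix.diagonal (fun i : Fin k => lam ^ (i.val + 1)) := by
  obtain ⟨a, ha0, rfl⟩ := hA
  constructor
  · intro hcomm
    refine ⟨a 0, ha0, ?_⟩
    ext i j
    by_cases hij : i = j
    · subst hij
      rw [Matrix.diagonal_apply_eq, Mmat_diag]
    · rw [Matrix.diagonal_apply_ne _ hij]
      have h1 := congrFun (congrFun hcomm i) j
      rw [Eone, Matrix.mul_diagonal, Matrix.diagonal_mul] at h1
      have hne : ((j : ℕ) : ℂ) + 1 ≠ ((i : ℕ) : ℂ) + 1 := by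
        intro h
        apply hij
        have h' : ((j : ℕ) : ℂ) = ((i : ℕ) : ℂ) := by linear_combination h
        exact Fin.ext (Nat.cast_injective h').symm
      have : Mmat k a i j * (((j : ℕ) : ℂ) + 1 - (((i : ℕ) : ℂ) + 1)) = 0 := by ring_nf; linear_combination h1
      rcases mul_eq_zero.mp this with h | h
      · exact h
      · exact absurd (by linear_combination h) hne
  · rintro ⟨lam, hl, hA⟩
    have hc : (fun i : Fin k => lam ^ (i.val + 1) * (((i : ℕ) : ℂ) + 1))
        = fun i : Fin k => (((i : ℕ) : ℂ) + 1) * lam ^ (i.val + 1) := by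
      funext i; ring
    rw [hA, Eone, Matrix.diagonal_mul_diagonal, Matrix.diagonal_mul_diagonal, hc]
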